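/- arXiv:1912.12525 — 4 statements merged into one kernel-verified Lean document; each statement's English description precedes it below -/
import Mathlib

section
/- If a linear program min{c^T x : A x ≥ b} has a nonempty feasible region and its objective function is bounded below over that region, then the linear program attains its optimal value at some feasible point. -/
open Matrix
open scoped Classical

/-- Conical Carathéodory: any nonnegative combination can be rewritten as a nonnegative
combination whose support indexes a linearly independent family. -/
lemma carath_aux {E : Type*} [AddCommGroup E] [Module ℝ E] {ι : Type*} [Fintype ι]
    (g : ι → E) :
    ∀ (k : ℕ) (l : ι → ℝ), (∀ i, 0 ≤ l i) →
      (Finset.univ.filter fun i => l i ≠ 0).card ≤ k →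
      ∃ l' : ι → ℝ, (∀ i, 0 ≤ l' i) ∧ ∑ i, l' i • g i = ∑ i, l i • g i ∧
        LinearIndependent ℝ (fun i : {i // l' i ≠ 0} => g i) := by
  intro k
  induction k with
  | zero =>
      intro l hl hcard
      refine ⟨l, hl, rfl, ?_⟩
      have hempty : IsEmpty {i // l i ≠ 0} := by
        constructor
        rintro ⟨i, hi⟩
        have : i ∈ Finset.univ.filter fun i => l i ≠ 0 := by simp [hi]
        have := Finset.card_pos.mpr ⟨i, this⟩
        omega
      exact linearIndependent_empty_type
  | succ k ih =>
      intro l hl hcard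
      by_cases hli : LinearIndependent ℝ (fun i : {i // l i ≠ 0} => g i)
      · exact ⟨l, hl, rfl, hli⟩
      · obtain ⟨f, hfsum, j, hfj⟩ := Fintype.not_linearIndependent_iff.mp hli
        -- extend f to ι by 0
        set μ0 : ι → ℝ := fun i => if h : l i ≠ 0 then f ⟨i, h⟩ else 0 with hμ0
        have hsum0 : ∀ (μ : ι → ℝ), (∀ i, l i = 0 → μ i = 0) →
            (∀ i (h : l i ≠ 0), μ i = f ⟨i, h⟩ ∨ μ i = -f ⟨i, h⟩) → True := fun _ _ _ => trivial
        have hμ0sum : ∑ i, μ0 i • g i = 0 := by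
          have h1 : ∑ i, μ0 i • g i = ∑ i : {i // l i ≠ 0}, μ0 i • g i := by
            rw [← Finset.sum_subtype (Finset.univ.filter fun i => l i ≠ 0)
              (by intro x; simp) (fun i => μ0 i • g i)]
            refine (Finset.sum_subset (Finset.subset_univ _) ?_).symm
            intro i _ hi
            have : ¬ l i ≠ 0 := by simpa using hi
            simp [hμ0, this]
          rw [h1]
          have : ∀ i : {i // l i ≠ 0}, μ0 i • g i = f i • g i := by
            rintro ⟨i, hi⟩; simp [hμ0, hi]
          rw [Finset.sum_congr rfl (fun i _ => this i)]
          exact hfsum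
        have hμ0supp : ∀ i, l i = 0 → μ0 i = 0 := by
          intro i hi; simp [hμ0, hi]
        have hμ0j : μ0 j.1 ≠ 0 := by
          have := j.2
          simp [hμ0, this, hfj]
        -- choose sign so that some coefficient is positive
        obtain ⟨μ, hμsum, hμsupp, i1, hi1⟩ :
            ∃ μ : ι → ℝ, ∑ i, μ i • g i = 0 ∧ (∀ i, l i = 0 → μ i = 0) ∧ ∃ i, 0 < μ i := by
          rcases lt_or_gt_of_ne hμ0j with h | h
          · exact ⟨-μ0, by simp [Finset.sum_neg_distrib, neg_smul, hμ0sum]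
              , fun i hi => by simp [hμ0supp i hi], j.1, by simpa using h⟩
          · exact ⟨μ0, hμ0sum, hμ0supp, j.1, h⟩
        -- minimize ratio
        have hS : (Finset.univ.filter fun i => 0 < μ i).Nonempty := ⟨i1, by simp [hi1]⟩
        obtain ⟨i0, hi0mem, hi0min⟩ :=
          Finset.exists_min_image (Finset.univ.filter fun i => 0 < μ i) (fun i => l i / μ i) hS
        have hμi0 : 0 < μ i0 := by simpa using hi0mem
        set t : ℝ := l i0 / μ i0 with ht
        have ht0 : 0 ≤ t := div_nonneg (hl i0) hμi0.le
        set l2 : ι → ℝ := fun i => l i - t * μ i with hl2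
        have hl2nn : ∀ i, 0 ≤ l2 i := by
          intro i
          rcases le_or_gt (μ i) 0 with h | h
          · have : t * μ i ≤ 0 := mul_nonpos_of_nonneg_of_nonpos ht0 h
            simp only [hl2]; linarith [hl i]
          · have := hi0min i (by simp [h])
            have := (le_div_iff₀ h).mp this
            simp only [hl2]; linarith
        have hl2sum : ∑ i, l2 i • g i = ∑ i, l i • g i := by
          simp only [hl2, sub_smul, mul_smul, Finset.sum_sub_distrib]
          rw [← Finset.smul_sum, hμsum, smul_zero, sub_zero]
        have hl2i0 : l2 i0 = 0 := by
          simp only [hl2, ht]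
          field_simp
          ring
        have hli0 : l i0 ≠ 0 := fun h => by
          have := hμ0supp i0 h
          -- μ agrees with ±μ0 on support; easier: μ i0 = 0 from hμsupp
          have := hμsupp i0 h
          exact absurd this (ne_of_gt hμi0)
        have hsubset : (Finset.univ.filter fun i => l2 i ≠ 0) ⊆
            (Finset.univ.filter fun i => l i ≠ 0).erase i0 := by
          intro i hi
          simp only [Finset.mem_filter, Finset.mem_univ, true_and] at hi
          refine Finset.mem_erase.mpr ⟨?_, ?_⟩
          · rintro rfl; exact hi hl2i0
          · simp only [Finset.mem_filter, Finset.mem_univ, true_and]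
            intro h
            exact hi (by simp [hl2, h, hμsupp i h])
        have hcard2 : (Finset.univ.filter fun i => l2 i ≠ 0).card ≤ k := by
          have h1 := Finset.card_le_card hsubset
          have hmem : i0 ∈ Finset.univ.filter fun i => l i ≠ 0 := by simp [hli0]
          have h2 := Finset.card_erase_of_mem hmem
          omega
        obtain ⟨l', h1, h2, h3⟩ := ih l2 hl2nn hcard2
        exact ⟨l', h1, h2.trans hl2sum, h3⟩

/-- A finitely generated convex cone in a finite-dimensional real normed space is closed. -/
lemma cone_isClosed {E : Type*} [NormedAddCommGroup E] [NormedSpace ℝ E]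
    [FiniteDimensional ℝ E] {ι : Type*} [Fintype ι] (g : ι → E) :
    IsClosed {v : E | ∃ l : ι → ℝ, (∀ i, 0 ≤ l i) ∧ v = ∑ i, l i • g i} := by
  have key : {v : E | ∃ l : ι → ℝ, (∀ i, 0 ≤ l i) ∧ v = ∑ i, l i • g i} =
      ⋃ s ∈ {s : Finset ι | LinearIndependent ℝ (fun i : s => g i)},
        (fun l : s → ℝ => ∑ i, l i • g i.1) '' {l | ∀ i, 0 ≤ l i} := by
    ext v
    constructor
    · rintro ⟨l, hl, rfl⟩
      obtain ⟨l', hl', hsum, hli⟩ := carath_aux g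
        (Finset.univ.filter fun i => l i ≠ 0).card l hl le_rfl
      set s : Finset ι := Finset.univ.filter fun i => l' i ≠ 0 with hs
      have hmem : ∀ i : ι, i ∈ s ↔ l' i ≠ 0 := by intro i; simp [hs]
      have hlis : LinearIndependent ℝ (fun i : s => g i) := by
        have h := hli.comp (Equiv.subtypeEquivRight hmem)
          (Equiv.subtypeEquivRight hmem).injective
        have heq : (fun i : {i // l' i ≠ 0} => g i) ∘ (Equiv.subtypeEquivRight hmem)
            = fun i : s => g i := by
          funext i; simp [Equiv.subtypeEquivRight]; rfl
        rwa [heq] at h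
      refine Set.mem_biUnion hlis ⟨fun i => l' i.1, fun i => hl' i.1, ?_⟩
      dsimp only
      have h1 : ∑ i : s, l' i.1 • g i.1 = ∑ i ∈ s, l' i • g i :=
        Finset.sum_coe_sort s (fun i => l' i • g i)
      have h2 : ∑ i ∈ s, l' i • g i = ∑ i, l' i • g i := by
        refine Finset.sum_subset (Finset.subset_univ _) ?_
        intro i _ hi
        have : ¬ l' i ≠ 0 := by simpa [hs] using hi
        simp [not_not.mp this]
      rw [h1, h2, hsum]
    · intro hv
      simp only [Set.mem_iUnion, Set.mem_image, Set.mem_setOf_eq] at hv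
      obtain ⟨s, hs, l, hlnn, hveq⟩ := hv
      subst hveq
      refine ⟨fun i => if h : i ∈ s then l ⟨i, h⟩ else 0, ?_, ?_⟩
      · intro i
        by_cases h : i ∈ s
        · simpa [h] using hlnn ⟨i, h⟩
        · simp [h]
      · have h2 : ∑ i, (if h : i ∈ s then l ⟨i, h⟩ else 0) • g i
            = ∑ i ∈ s, (if h : i ∈ s then l ⟨i, h⟩ else 0) • g i := by
          refine (Finset.sum_subset s.subset_univ ?_).symm
          intro i _ hi
          simp [hi]
        rw [h2, ← Finset.sum_coe_sort s]
        refine (Finset.sum_congr rfl fun i _ => ?_)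
        simp [i.2]
  rw [key]
  refine Set.Finite.isClosed_biUnion (Set.toFinite _) ?_
  intro s hs
  set T : (↥s → ℝ) →ₗ[ℝ] E := Fintype.linearCombination ℝ (fun i : s => g i.1) with hT
  have hTapp : ∀ l : ↥s → ℝ, T l = ∑ i, l i • g i.1 := fun l =>
    Fintype.linearCombination_apply ℝ _ l
  have hinj : LinearMap.ker T = ⊥ := by
    rw [LinearMap.ker_eq_bot']
    intro f hf
    rw [hTapp] at hf
    have := Fintype.linearIndependent_iff.mp hs f hf
    funext i
    exact this i
  have hemb := T.isClosedEmbedding_of_injective hinj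
  have hcl : IsClosed {l : ↥s → ℝ | ∀ i, 0 ≤ l i} := by
    have : {l : ↥s → ℝ | ∀ i, 0 ≤ l i} = ⋂ i, {l : ↥s → ℝ | 0 ≤ l i} := by
      ext l; simp [Set.mem_iInter]
    rw [this]
    exact isClosed_iInter fun i => isClosed_le continuous_const (continuous_apply i)
  have h := hemb.isClosedMap _ hcl
  have heq : (fun l : ↥s → ℝ => ∑ i, l i • g i.1) '' {l | ∀ i, 0 ≤ l i}
      = T '' {l | ∀ i, 0 ≤ l i} := by
    apply Set.image_congr
    intro l _
    exact (hTapp l).symm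
  rw [heq]
  exact h

/-- If a linear program `min {cᵀx : Ax ≥ b}` has a nonempty feasible region and its
objective is bounded below over that region, then it attains its optimum at a feasible point. -/
theorem lp_attains_optimum (m n : ℕ) (A : Matrix (Fin m) (Fin n) ℝ)
    (b : Fin m → ℝ) (c : Fin n → ℝ)
    (hne : ∃ x : Fin n → ℝ, ∀ i, b i ≤ A.mulVec x i)
    (hbdd : BddBelow {v : ℝ | ∃ x : Fin n → ℝ, (∀ i, b i ≤ A.mulVec x i) ∧ v = c ⬝ᵥ x}) :
    ∃ x : Fin n → ℝ, (∀ i, b i ≤ A.mulVec x i) ∧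
      ∀ y : Fin n → ℝ, (∀ i, b i ≤ A.mulVec y i) → c ⬝ᵥ x ≤ c ⬝ᵥ y := by
  set V : Set ℝ := {v : ℝ | ∃ x : Fin n → ℝ, (∀ i, b i ≤ A.mulVec x i) ∧ v = c ⬝ᵥ x} with hV
  have hVne : V.Nonempty := by
    obtain ⟨x, hx⟩ := hne
    exact ⟨c ⬝ᵥ x, x, hx, rfl⟩
  set μ : ℝ := sInf V with hμ
  set g : (Fin n ⊕ Fin n ⊕ Fin m) → (Fin m → ℝ) × ℝ :=
    Sum.elim (fun j => ((fun i => A i j), c j))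
      (Sum.elim (fun j => -((fun i => A i j), c j))
        (fun i0 => (-(Pi.single i0 1), 0))) with hg
  set K : Set ((Fin m → ℝ) × ℝ) :=
    {v | ∃ l : (Fin n ⊕ Fin n ⊕ Fin m) → ℝ, (∀ i, 0 ≤ l i) ∧ v = ∑ i, l i • g i} with hK
  -- key computation of the generic cone element
  have hsum : ∀ l : (Fin n ⊕ Fin n ⊕ Fin m) → ℝ,
      ∑ i, l i • g i =
        (A.mulVec (fun j => l (.inl j) - l (.inr (.inl j))) - (fun i => l (.inr (.inr i))),
         c ⬝ᵥ (fun j => l (.inl j) - l (.inr (.inl j)))) := by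
    intro l
    refine Prod.ext ?_ ?_
    · rw [Prod.fst_sum]
      funext i
      rw [Finset.sum_apply]
      rw [Fintype.sum_sum_type, Fintype.sum_sum_type]
      simp only [hg, Sum.elim_inl, Sum.elim_inr, Prod.smul_fst, Prod.fst_neg, Prod.smul_mk,
        Pi.smul_apply, Pi.neg_apply, smul_eq_mul, smul_neg, Pi.single_apply, mul_ite,
        mul_one, mul_zero, Finset.sum_ite_eq, Finset.mem_univ, if_true]
      simp only [mulVec, dotProduct, Pi.sub_apply, mul_sub, Finset.sum_sub_distrib,
        Finset.sum_neg_distrib, sub_eq_add_neg, neg_neg, neg_add_rev]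
      simp only [Finset.sum_ite_eq, Finset.mem_univ, if_true, mul_sub,
        Finset.sum_sub_distrib]
      rw [Finset.sum_congr rfl (fun j (_ : j ∈ Finset.univ) => mul_comm (l (.inl j)) (A i j)),
        Finset.sum_congr rfl (fun j (_ : j ∈ Finset.univ) =>
          mul_comm (l (.inr (.inl j))) (A i j)),
        ]
      have h5 : ∑ x, A i x * (l (Sum.inl x) + -l (Sum.inr (Sum.inl x)))
          = ∑ x, A i x * l (Sum.inl x) - ∑ x, A i x * l (Sum.inr (Sum.inl x)) := by
        rw [← Finset.sum_sub_distrib]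
        exact Finset.sum_congr rfl fun j _ => by ring
      have hfin : ∑ j : Fin n, A i j * l (Sum.inl j) +
            (-∑ j : Fin n, A i j * l (Sum.inr (Sum.inl j)) + -l (Sum.inr (Sum.inr i))) =
          ∑ x : Fin n, A i x * (l (Sum.inl x) + -l (Sum.inr (Sum.inl x)))
            + -l (Sum.inr (Sum.inr i)) := by
        rw [h5]; ring
      exact hfin
    · rw [Prod.snd_sum]
      rw [Fintype.sum_sum_type, Fintype.sum_sum_type]
      simp only [hg, Sum.elim_inl, Sum.elim_inr, Prod.smul_snd, Prod.snd_neg, Prod.smul_mk,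
        smul_eq_mul, smul_neg, mul_zero, Finset.sum_const_zero, add_zero, smul_zero]
      rw [← Finset.sum_add_distrib]
      simp only [dotProduct]
      exact Finset.sum_congr rfl fun j _ => by ring
  -- feasible points give cone members
  have mem1 : ∀ x : Fin n → ℝ, (∀ i, b i ≤ A.mulVec x i) → ((b, c ⬝ᵥ x) : (Fin m → ℝ) × ℝ) ∈ K := by
    intro x hx
    refine ⟨Sum.elim (fun j => max (x j) 0)
      (Sum.elim (fun j => max (-x j) 0) (fun i => A.mulVec x i - b i)), ?_, ?_⟩
    · rintro (j | j | i)
      · exact le_max_right _ _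
      · exact le_max_right _ _
      · simpa using sub_nonneg.mpr (hx i)
    · rw [hsum]
      have hx' : (fun j => Sum.elim (fun j => max (x j) 0)
          (Sum.elim (fun j => max (-x j) 0) (fun i => A.mulVec x i - b i)) (Sum.inl j)
          - Sum.elim (fun j => max (x j) 0)
          (Sum.elim (fun j => max (-x j) 0) (fun i => A.mulVec x i - b i))
            (Sum.inr (Sum.inl j))) = x := by
        funext j
        simp [max_zero_sub_max_neg_zero_eq_self]
      rw [hx']
      refine Prod.ext ?_ ?_
      · funext i
        simp
      · simp
  -- cone members over b give feasible points
  have mem2 : ∀ r : ℝ, ((b, r) : (Fin m → ℝ) × ℝ) ∈ K →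
      ∃ x : Fin n → ℝ, (∀ i, b i ≤ A.mulVec x i) ∧ c ⬝ᵥ x = r := by
    intro r hr
    obtain ⟨l, hl, heq⟩ := hr
    rw [hsum] at heq
    refine ⟨fun j => l (.inl j) - l (.inr (.inl j)), ?_, ?_⟩
    · intro i
      have h1 := congrArg (fun p : (Fin m → ℝ) × ℝ => p.1 i) heq
      simp only at h1
      have h2 := hl (.inr (.inr i))
      simp only [Pi.sub_apply] at h1
      linarith
    · exact (congrArg Prod.snd heq).symm
  -- a minimizing sequence
  have hseq : ∀ k : ℕ, ∃ w ∈ V, w < μ + 1/(k+1) := by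
    intro k
    refine exists_lt_of_csInf_lt hVne ?_
    have : (0:ℝ) < 1/(k+1) := by positivity
    linarith
  choose v hvV hvlt using hseq
  have hvge : ∀ k, μ ≤ v k := fun k => csInf_le hbdd (hvV k)
  have hvtend : Filter.Tendsto v Filter.atTop (nhds μ) := by
    have h1 : Filter.Tendsto (fun k : ℕ => μ + 1/(k+1)) Filter.atTop (nhds μ) := by
      have h0 := tendsto_one_div_add_atTop_nhds_zero_nat (𝕜 := ℝ)
      have h2 := Filter.Tendsto.const_add μ h0
      simpa using h2
    exact tendsto_of_tendsto_of_tendsto_of_le_of_le tendsto_const_nhds h1 hvge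
      (fun k => (hvlt k).le)
  have hmemK : ((b, μ) : (Fin m → ℝ) × ℝ) ∈ K := by
    have hcl : IsClosed K := cone_isClosed g
    have htend2 : Filter.Tendsto (fun k => ((b, v k) : (Fin m → ℝ) × ℝ))
        Filter.atTop (nhds (b, μ)) := by
      rw [nhds_prod_eq]
      exact Filter.Tendsto.prodMk tendsto_const_nhds hvtend
    refine hcl.mem_of_tendsto htend2 ?_
    refine Filter.Eventually.of_forall fun k => ?_
    obtain ⟨x, hx, hxv⟩ := hvV k
    rw [hxv]
    exact mem1 x hx
  obtain ⟨x, hx, hxμ⟩ := mem2 μ hmemK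
  refine ⟨x, hx, fun y hy => ?_⟩
  rw [hxμ]
  exact csInf_le hbdd ⟨y, hy, rfl⟩
end

section
/- In a finite-horizon Markov decision process with bounded rewards, for any penalty function of the form π_i(a, ω) = V_{i+1}(f(x_i,a), ξ_{i+1}(ω)) - E[V_{i+1}(f(x_i,a), ξ_{i+1}) | ξ_i(ω)] built from any integrable functions V_{i+1}, the expectation of the pathwise (hindsight-optimal) penalized value is an upper bound on the optimal policy value. -/
open Finset Classical

noncomputable section
open scoped Classical

/-- State trajectory induced by a deterministic transition function, an initial state,
and a sequence of actions. -/
def traj {S A : Type} (f : S → A → S) (x0 : S) (σ : ℕ → A) : ℕ → S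
  | 0 => x0
  | n + 1 => f (traj f x0 σ n) (σ n)

/-- The trajectory up to time `i` only depends on the actions at times `< i`. -/
lemma traj_congr {S A : Type} (f : S → A → S) (x0 : S) (σ σ' : ℕ → A) :
    ∀ i : ℕ, (∀ j < i, σ j = σ' j) → traj f x0 σ i = traj f x0 σ' i := by
  intro i
  induction i with
  | zero => intro _; rfl
  | succ n ih =>
    intro h
    show f (traj f x0 σ n) (σ n) = f (traj f x0 σ' n) (σ' n)
    rw [ih (fun j hj => h j (hj.trans (Nat.lt_succ_self n))), h n (Nat.lt_succ_self n)]

/-- Information relaxation weak duality for a finite-horizon MDP with bounded rewards: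
for any martingale-difference penalty (zero conditional expectation given the noise history,
for every fixed state and action), the expectation of the pathwise hindsight-optimal
penalized value is an upper bound on the optimal (nonanticipative) policy value `V_0`. -/
theorem information_relaxation_weak_duality
    (Ω : Type) [Fintype Ω] (P : Ω → ℝ) (hP0 : ∀ ω, 0 ≤ P ω) (hP1 : ∑ ω, P ω = 1)
    (Z : Type) (ξ : ℕ → Ω → Z)
    (S A : Type) [Fintype A] [Nonempty A] (f : S → A → S) (x0 : S)
    (r : ℕ → S → A → Z → ℝ) (δ : ℝ) (hδ0 : 0 < δ) (hδ1 : δ ≤ 1) (I : ℕ) (hI : 0 < I)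
    (pen : ℕ → S → A → Ω → ℝ)
    (hmart : ∀ (i : ℕ) (x : S) (a : A) (ω : Ω),
      ∑ ω' ∈ Finset.univ.filter (fun ω' => ∀ j ≤ i, ξ j ω' = ξ j ω), P ω' * pen i x a ω' = 0) :
    (⨆ π : {π : ℕ → Ω → A //
        ∀ (i : ℕ) (ω ω' : Ω), (∀ j ≤ i, ξ j ω = ξ j ω') → π i ω = π i ω'},
      ∑ ω, P ω * ∑ i ∈ Finset.range I,
        δ ^ i * r i (traj f x0 (fun n => π.1 n ω) i) (π.1 i ω) (ξ i ω)) ≤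
    ∑ ω, P ω * sSup {v : ℝ | ∃ σ : ℕ → A,
      v = ∑ i ∈ Finset.range I,
        δ ^ i * (r i (traj f x0 σ i) (σ i) (ξ i ω) - δ * pen i (traj f x0 σ i) (σ i) ω)} := by
  classical
  -- the penalized pathwise value
  let V : Ω → (ℕ → A) → ℝ := fun ω σ => ∑ i ∈ Finset.range I,
      δ ^ i * (r i (traj f x0 σ i) (σ i) (ξ i ω) - δ * pen i (traj f x0 σ i) (σ i) ω)
  -- each penalized-value set is bounded above (it is finite)
  have hbdd : ∀ ω, BddAbove {v : ℝ | ∃ σ : ℕ → A, v = V ω σ} := by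
    intro ω
    have hsub : {v : ℝ | ∃ σ : ℕ → A, v = V ω σ} ⊆
        Set.range (fun g : Fin I → A =>
          V ω (fun n => if h : n < I then g ⟨n, h⟩ else Classical.arbitrary A)) := by
      rintro v ⟨σ, rfl⟩
      refine ⟨fun i => σ i.1, ?_⟩
      apply Finset.sum_congr rfl
      intro i hi
      have hiI : i < I := Finset.mem_range.mp hi
      have ht : traj f x0 (fun n => if h : n < I then σ n else Classical.arbitrary A) i
          = traj f x0 σ i := by
        apply traj_congr
        intro j hj
        simp [dif_pos (hj.trans hiI)]
      simp only [ht, dif_pos hiI]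
    exact (Set.Finite.subset (Set.finite_range _) hsub).bddAbove
  haveI : Nonempty {π : ℕ → Ω → A //
      ∀ (i : ℕ) (ω ω' : Ω), (∀ j ≤ i, ξ j ω = ξ j ω') → π i ω = π i ω'} :=
    ⟨⟨fun _ _ => Classical.arbitrary A, fun _ _ _ _ => rfl⟩⟩
  apply ciSup_le
  rintro ⟨π, hπ⟩
  -- the expected penalty of the nonanticipative policy is zero
  have hzero : ∑ ω, P ω * ∑ i ∈ Finset.range I,
      δ ^ i * (δ * pen i (traj f x0 (fun n => π n ω) i) (π i ω) ω) = 0 := by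
    have hswap : ∑ ω, P ω * ∑ i ∈ Finset.range I,
        δ ^ i * (δ * pen i (traj f x0 (fun n => π n ω) i) (π i ω) ω)
        = ∑ i ∈ Finset.range I, ∑ ω,
          P ω * (δ ^ i * (δ * pen i (traj f x0 (fun n => π n ω) i) (π i ω) ω)) := by
      rw [Finset.sum_comm]
      exact Finset.sum_congr rfl fun ω _ => Finset.mul_sum _ _ _
    rw [hswap]
    apply Finset.sum_eq_zero
    intro i _
    -- decompose over fibers of the noise history map
    set h : Ω → (Fin (i + 1) → Z) := fun ω j => ξ j ω with hh
    rw [← Finset.sum_fiberwise_of_maps_to (g := h) (t := Finset.univ.image h)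
      (fun x _ => Finset.mem_image_of_mem h (Finset.mem_univ x))]
    apply Finset.sum_eq_zero
    intro z hz
    obtain ⟨ω₀, -, hω₀⟩ := Finset.mem_image.mp hz
    have hfilter : (Finset.univ.filter fun ω' => h ω' = z)
        = Finset.univ.filter (fun ω' => ∀ j ≤ i, ξ j ω' = ξ j ω₀) := by
      ext ω'
      simp only [Finset.mem_filter, Finset.mem_univ, true_and]
      constructor
      · intro hh' j hj
        have : h ω' = h ω₀ := hh'.trans hω₀.symm
        exact congrFun this ⟨j, Nat.lt_succ_of_le hj⟩
      · intro hh'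
        rw [← hω₀]
        funext j
        exact hh' j (Nat.le_of_lt_succ j.2)
    rw [hfilter]
    -- on this fiber the state and action of the policy are constant
    have hconstπ : ∀ ω' ∈ Finset.univ.filter (fun ω' => ∀ j ≤ i, ξ j ω' = ξ j ω₀),
        ∀ j ≤ i, π j ω' = π j ω₀ := by
      intro ω' hmem j hj
      exact hπ j ω' ω₀ (fun k hk => (Finset.mem_filter.mp hmem).2 k (hk.trans hj))
    have hterm : ∀ ω' ∈ Finset.univ.filter (fun ω' => ∀ j ≤ i, ξ j ω' = ξ j ω₀),
        P ω' * (δ ^ i * (δ * pen i (traj f x0 (fun n => π n ω') i) (π i ω') ω'))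
        = δ ^ i * δ * (P ω' * pen i (traj f x0 (fun n => π n ω₀) i) (π i ω₀) ω') := by
      intro ω' hmem
      have ht : traj f x0 (fun n => π n ω') i = traj f x0 (fun n => π n ω₀) i :=
        traj_congr f x0 _ _ i (fun j hj => hconstπ ω' hmem j hj.le)
      rw [ht, hconstπ ω' hmem i le_rfl]
      ring
    rw [Finset.sum_congr rfl hterm, ← Finset.mul_sum,
      hmart i (traj f x0 (fun n => π n ω₀) i) (π i ω₀) ω₀, mul_zero]
  -- split the reward into penalized value plus penalty
  have hsplit : ∑ ω, P ω * ∑ i ∈ Finset.range I,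
      δ ^ i * r i (traj f x0 (fun n => π n ω) i) (π i ω) (ξ i ω)
      = ∑ ω, P ω * V ω (fun n => π n ω)
        + ∑ ω, P ω * ∑ i ∈ Finset.range I,
          δ ^ i * (δ * pen i (traj f x0 (fun n => π n ω) i) (π i ω) ω) := by
    rw [← Finset.sum_add_distrib]
    apply Finset.sum_congr rfl
    intro ω _
    rw [← mul_add, ← Finset.sum_add_distrib]
    congr 1
    apply Finset.sum_congr rfl
    intro i _
    ring
  calc ∑ ω, P ω * ∑ i ∈ Finset.range I,
        δ ^ i * r i (traj f x0 (fun n => π n ω) i) (π i ω) (ξ i ω)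
      = ∑ ω, P ω * V ω (fun n => π n ω) := by rw [hsplit, hzero, add_zero]
    _ ≤ ∑ ω, P ω * sSup {v : ℝ | ∃ σ : ℕ → A, v = V ω σ} := by
        apply Finset.sum_le_sum
        intro ω _
        exact mul_le_mul_of_nonneg_left
          (le_csSup (hbdd ω) ⟨fun n => π n ω, rfl⟩) (hP0 ω)
    _ = _ := rfl
end
end

section
/- If the penalty in the information relaxation dual is constructed from the true value function of the MDP, then for every sample path the penalized hindsight optimization equals the optimal value V_0; i.e., the dual with ideal penalties attains the optimal policy value almost surely with zero variance. -/
noncomputable section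
open Finset
open scoped Classical

/-- Exact dynamic-programming value function, indexed by the number `k` of stages to go
(so that `dpval … k` is the value function at stage `I - k`), for a finite-horizon MDP with
exogenous Markov noise governed by the transition kernel `p`. -/
def dpval {S A Z : Type} [Fintype A] [Nonempty A] [Fintype Z]
    (f : S → A → S) (r : ℕ → S → A → Z → ℝ) (p : Z → Z → ℝ) (δ : ℝ) (I : ℕ) :
    ℕ → S → Z → ℝ
  | 0 => fun _ _ => 0
  | k + 1 => fun x z => Finset.univ.sup' Finset.univ_nonempty fun a : A =>
      r (I - (k + 1)) x a z + δ * ∑ z' : Z, p z z' * dpval f r p δ I k (f x a) z'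

/-- With ideal penalties built from the exact value function, the penalized hindsight
optimization equals the optimal value `V_0(x_0)` on every sample path of positive probability:
the information relaxation dual with ideal penalties attains the optimal policy value almost
surely, with zero variance. -/
theorem ideal_penalty_zero_variance
    (Ω : Type) [Fintype Ω] (P : Ω → ℝ) (hP0 : ∀ ω, 0 ≤ P ω) (hP1 : ∑ ω, P ω = 1)
    (Z : Type) [Fintype Z] (ξ : ℕ → Ω → Z) (z0 : Z)
    (hz0 : ∀ ω, P ω ≠ 0 → ξ 0 ω = z0)
    (p : Z → Z → ℝ) (hp0 : ∀ z z', 0 ≤ p z z') (hp1 : ∀ z, ∑ z', p z z' = 1)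
    (S A : Type) [Fintype A] [Nonempty A] (f : S → A → S) (x0 : S)
    (r : ℕ → S → A → Z → ℝ) (δ : ℝ) (hδ0 : 0 < δ) (hδ1 : δ ≤ 1) (I : ℕ) (hI : 0 < I) :
    ∀ ω : Ω, P ω ≠ 0 →
      sSup {v : ℝ | ∃ σ : ℕ → A,
        v = ∑ i ∈ Finset.range I, δ ^ i *
          (r i (traj f x0 σ i) (σ i) (ξ i ω) - δ *
            (dpval f r p δ I (I - (i + 1)) (f (traj f x0 σ i) (σ i)) (ξ (i + 1) ω) -
              ∑ z' : Z, p (ξ i ω) z' * dpval f r p δ I (I - (i + 1)) (f (traj f x0 σ i) (σ i)) z'))}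
        = dpval f r p δ I I x0 z0 := by
  intro ω hω
  have hz00 : ξ 0 ω = z0 := hz0 ω hω
  -- unfolding the value function at stage i < I
  have hunfold : ∀ i, i < I → ∀ (x : S) (zz : Z),
      dpval f r p δ I (I - i) x zz =
        Finset.univ.sup' Finset.univ_nonempty (fun a : A =>
          r i x a zz + δ * ∑ z' : Z, p zz z' * dpval f r p δ I (I - (i+1)) (f x a) z') := by
    intro i hi x zz
    have h1 : I - i = (I - (i+1)) + 1 := by omega
    rw [h1]
    have h2 : I - ((I - (i+1)) + 1) = i := by omega
    simp only [dpval, h2]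
  -- telescoping identity for the penalized reward of any action sequence
  have hsum : ∀ σ : ℕ → A,
      (∑ i ∈ Finset.range I, δ ^ i *
        (r i (traj f x0 σ i) (σ i) (ξ i ω) - δ *
          (dpval f r p δ I (I - (i + 1)) (f (traj f x0 σ i) (σ i)) (ξ (i + 1) ω) -
            ∑ z' : Z, p (ξ i ω) z' * dpval f r p δ I (I - (i + 1)) (f (traj f x0 σ i) (σ i)) z')))
      = (∑ i ∈ Finset.range I, δ ^ i *
          ((r i (traj f x0 σ i) (σ i) (ξ i ω) +
              δ * ∑ z' : Z, p (ξ i ω) z' * dpval f r p δ I (I - (i+1)) (f (traj f x0 σ i) (σ i)) z') -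
            dpval f r p δ I (I - i) (traj f x0 σ i) (ξ i ω)))
        + dpval f r p δ I I x0 (ξ 0 ω) := by
    intro σ
    have htel := Finset.sum_range_sub'
      (fun j => δ ^ j * dpval f r p δ I (I - j) (traj f x0 σ j) (ξ j ω)) I
    have hIend : dpval f r p δ I (I - I) (traj f x0 σ I) (ξ I ω) = 0 := by
      simp [Nat.sub_self, dpval]
    calc
      (∑ i ∈ Finset.range I, δ ^ i *
        (r i (traj f x0 σ i) (σ i) (ξ i ω) - δ *
          (dpval f r p δ I (I - (i + 1)) (f (traj f x0 σ i) (σ i)) (ξ (i + 1) ω) -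
            ∑ z' : Z, p (ξ i ω) z' * dpval f r p δ I (I - (i + 1)) (f (traj f x0 σ i) (σ i)) z')))
        = ∑ i ∈ Finset.range I,
            ((δ ^ i *
              ((r i (traj f x0 σ i) (σ i) (ξ i ω) +
                  δ * ∑ z' : Z, p (ξ i ω) z' * dpval f r p δ I (I - (i+1)) (f (traj f x0 σ i) (σ i)) z') -
                dpval f r p δ I (I - i) (traj f x0 σ i) (ξ i ω)))
              + (δ ^ i * dpval f r p δ I (I - i) (traj f x0 σ i) (ξ i ω)
                 - δ ^ (i+1) * dpval f r p δ I (I - (i+1)) (traj f x0 σ (i+1)) (ξ (i+1) ω))) := by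
          refine Finset.sum_congr rfl fun i hi => ?_
          have htr : traj f x0 σ (i+1) = f (traj f x0 σ i) (σ i) := rfl
          rw [htr]; ring
      _ = (∑ i ∈ Finset.range I, δ ^ i *
            ((r i (traj f x0 σ i) (σ i) (ξ i ω) +
                δ * ∑ z' : Z, p (ξ i ω) z' * dpval f r p δ I (I - (i+1)) (f (traj f x0 σ i) (σ i)) z') -
              dpval f r p δ I (I - i) (traj f x0 σ i) (ξ i ω)))
          + ∑ i ∈ Finset.range I,
              (δ ^ i * dpval f r p δ I (I - i) (traj f x0 σ i) (ξ i ω)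
               - δ ^ (i+1) * dpval f r p δ I (I - (i+1)) (traj f x0 σ (i+1)) (ξ (i+1) ω)) :=
          Finset.sum_add_distrib
      _ = _ := by
          rw [htel, hIend]
          simp [traj]
  -- each slack term is nonpositive
  have hslack : ∀ (σ : ℕ → A) (i : ℕ), i < I →
      δ ^ i * ((r i (traj f x0 σ i) (σ i) (ξ i ω) +
          δ * ∑ z' : Z, p (ξ i ω) z' * dpval f r p δ I (I - (i+1)) (f (traj f x0 σ i) (σ i)) z') -
        dpval f r p δ I (I - i) (traj f x0 σ i) (ξ i ω)) ≤ 0 := by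
    intro σ i hi
    have hQ : (r i (traj f x0 σ i) (σ i) (ξ i ω) +
          δ * ∑ z' : Z, p (ξ i ω) z' * dpval f r p δ I (I - (i+1)) (f (traj f x0 σ i) (σ i)) z')
        ≤ dpval f r p δ I (I - i) (traj f x0 σ i) (ξ i ω) := by
      rw [hunfold i hi]
      exact Finset.le_sup' (fun a : A => r i (traj f x0 σ i) a (ξ i ω) + δ * ∑ z' : Z, p (ξ i ω) z' * dpval f r p δ I (I - (i+1)) (f (traj f x0 σ i) a) z') (Finset.mem_univ (σ i))
    have := mul_nonneg (pow_nonneg hδ0.le i) (by linarith : (0:ℝ) ≤ dpval f r p δ I (I - i) (traj f x0 σ i) (ξ i ω) - (r i (traj f x0 σ i) (σ i) (ξ i ω) + δ * ∑ z' : Z, p (ξ i ω) z' * dpval f r p δ I (I - (i+1)) (f (traj f x0 σ i) (σ i)) z'))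
    nlinarith [this]
  -- greedy selector attaining the supremum
  have hsel : ∀ (i : ℕ) (x : S) (zz : Z), ∃ a : A,
      (Finset.univ.sup' Finset.univ_nonempty (fun a : A =>
        r i x a zz + δ * ∑ z' : Z, p zz z' * dpval f r p δ I (I - (i+1)) (f x a) z'))
      = r i x a zz + δ * ∑ z' : Z, p zz z' * dpval f r p δ I (I - (i+1)) (f x a) z' := by
    intro i x zz
    obtain ⟨a, -, ha⟩ := Finset.exists_mem_eq_sup' (s := (Finset.univ : Finset A)) Finset.univ_nonempty
      (fun a : A => r i x a zz + δ * ∑ z' : Z, p zz z' * dpval f r p δ I (I - (i+1)) (f x a) z' : A → ℝ)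
    exact ⟨a, ha⟩
  choose act hact using hsel
  -- greedy trajectory and action sequence
  let xs : ℕ → S := fun n => Nat.rec x0 (fun n xn => f xn (act n xn (ξ n ω))) n
  let σs : ℕ → A := fun n => act n (xs n) (ξ n ω)
  have hxs : ∀ n, traj f x0 σs n = xs n := by
    intro n
    induction n with
    | zero => rfl
    | succ n ih => simp only [traj, ih]; rfl
  -- greedy achieves equality at every stage
  have hopt : ∀ i, i < I →
      δ ^ i * ((r i (traj f x0 σs i) (σs i) (ξ i ω) +
          δ * ∑ z' : Z, p (ξ i ω) z' * dpval f r p δ I (I - (i+1)) (f (traj f x0 σs i) (σs i)) z') -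
        dpval f r p δ I (I - i) (traj f x0 σs i) (ξ i ω)) = 0 := by
    intro i hi
    rw [hunfold i hi, hxs i]
    show δ ^ i * ((r i (xs i) (act i (xs i) (ξ i ω)) (ξ i ω) + _) - _) = 0
    rw [← hact i (xs i) (ξ i ω)]
    ring
  -- value of the set at σs
  have hval : (∑ i ∈ Finset.range I, δ ^ i *
        (r i (traj f x0 σs i) (σs i) (ξ i ω) - δ *
          (dpval f r p δ I (I - (i + 1)) (f (traj f x0 σs i) (σs i)) (ξ (i + 1) ω) -
            ∑ z' : Z, p (ξ i ω) z' * dpval f r p δ I (I - (i + 1)) (f (traj f x0 σs i) (σs i)) z')))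
      = dpval f r p δ I I x0 z0 := by
    rw [hsum σs, hz00]
    rw [Finset.sum_congr rfl (fun i hi => hopt i (Finset.mem_range.mp hi))]
    simp
  -- upper bound for any σ
  have hub : ∀ v ∈ {v : ℝ | ∃ σ : ℕ → A,
      v = ∑ i ∈ Finset.range I, δ ^ i *
        (r i (traj f x0 σ i) (σ i) (ξ i ω) - δ *
          (dpval f r p δ I (I - (i + 1)) (f (traj f x0 σ i) (σ i)) (ξ (i + 1) ω) -
            ∑ z' : Z, p (ξ i ω) z' * dpval f r p δ I (I - (i + 1)) (f (traj f x0 σ i) (σ i)) z'))},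
      v ≤ dpval f r p δ I I x0 z0 := by
    rintro v ⟨σ, rfl⟩
    rw [hsum σ, hz00]
    have : (∑ i ∈ Finset.range I, δ ^ i *
          ((r i (traj f x0 σ i) (σ i) (ξ i ω) +
              δ * ∑ z' : Z, p (ξ i ω) z' * dpval f r p δ I (I - (i+1)) (f (traj f x0 σ i) (σ i)) z') -
            dpval f r p δ I (I - i) (traj f x0 σ i) (ξ i ω))) ≤ 0 :=
      Finset.sum_nonpos (fun i hi => hslack σ i (Finset.mem_range.mp hi))
    linarith
  refine le_antisymm (csSup_le ⟨_, σs, rfl⟩ hub) ?_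
  exact le_csSup ⟨_, hub⟩ ⟨σs, hval.symm⟩
end
end

section
/- If a linear program in standard inequality form has a non-degenerate optimal basic solution, then its dual linear program has a unique optimal solution. -/
open Matrix

/- helpers -/
private theorem sum_off_zero {m : ℕ} (p : Fin m → Prop) [DecidablePred p] (f : Fin m → ℝ)
    (h : ∀ i, ¬ p i → f i = 0) : ∑ i, f i = ∑ s : Subtype p, f s := by
  have h1 : ∑ i ∈ Finset.univ.filter p, f i = ∑ i, f i :=
    Finset.sum_filter_of_ne (fun x _ hx => by by_contra hp; exact hx (h x hp))
  rw [← h1]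
  exact Finset.sum_subtype (Finset.univ.filter p) (by simp) f

private theorem sum_dotProduct' {ι : Type*} [Fintype ι] {n : ℕ} (f : ι → Fin n → ℝ)
    (d : Fin n → ℝ) : (∑ i, f i) ⬝ᵥ d = ∑ i, f i ⬝ᵥ d := by
  simp only [dotProduct, Finset.sum_apply, Finset.sum_mul]
  rw [Finset.sum_comm]


/-- If the primal LP `min {cᵀx : Ax ≥ b}` has a non-degenerate optimal basic solution `xs`
(exactly `n` active constraints with linearly independent rows), then the dual LP
`max {bᵀy : Aᵀy = c, y ≥ 0}` has a unique optimal solution. -/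
theorem nondegenerate_primal_unique_dual (m n : ℕ) (A : Matrix (Fin m) (Fin n) ℝ)
    (b : Fin m → ℝ) (c : Fin n → ℝ) (xs : Fin n → ℝ)
    (hfeas : ∀ i, b i ≤ A.mulVec xs i)
    (hopt : ∀ x : Fin n → ℝ, (∀ i, b i ≤ A.mulVec x i) → c ⬝ᵥ xs ≤ c ⬝ᵥ x)
    (hcard : {i : Fin m | A.mulVec xs i = b i}.ncard = n)
    (hind : LinearIndependent ℝ (fun i : {i : Fin m // A.mulVec xs i = b i} => A i.1)) :
    ∃! y : Fin m → ℝ, (Aᵀ.mulVec y = c ∧ ∀ i, 0 ≤ y i) ∧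
      ∀ y' : Fin m → ℝ, (Aᵀ.mulVec y' = c ∧ ∀ i, 0 ≤ y' i) → b ⬝ᵥ y' ≤ b ⬝ᵥ y := by
  classical
  set p : Fin m → Prop := fun i => A.mulVec xs i = b i with hp
  -- weak duality
  have weak : ∀ y' : Fin m → ℝ, Aᵀ.mulVec y' = c → (∀ i, 0 ≤ y' i) → b ⬝ᵥ y' ≤ c ⬝ᵥ xs := by
    intro y' h1 h2
    have hc : c ⬝ᵥ xs = y' ⬝ᵥ A.mulVec xs := by
      rw [← h1, mulVec_transpose, dotProduct_mulVec]
    rw [hc, dotProduct, dotProduct]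
    exact Finset.sum_le_sum fun i _ => by
      have := mul_le_mul_of_nonneg_left (hfeas i) (h2 i)
      linarith [this]
  have hstrict : ∀ i, ¬ p i → 0 < A.mulVec xs i - b i := fun i hi =>
    lt_of_le_of_ne (by linarith [hfeas i]) (fun h => hi (by simp only [hp]; linarith))
  -- a dual feasible y' attaining c⬝xs vanishes off the active set
  have slack_zero : ∀ y' : Fin m → ℝ, Aᵀ.mulVec y' = c → (∀ i, 0 ≤ y' i) →
      b ⬝ᵥ y' = c ⬝ᵥ xs → ∀ i, ¬ p i → y' i = 0 := by
    intro y' h1 h2 h3 i hi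
    have hc : c ⬝ᵥ xs = y' ⬝ᵥ A.mulVec xs := by
      rw [← h1, mulVec_transpose, dotProduct_mulVec]
    have hsum : ∑ j, y' j * (A.mulVec xs j - b j) = 0 := by
      have : y' ⬝ᵥ A.mulVec xs - b ⬝ᵥ y' = 0 := by rw [h3, hc]; ring
      rw [← this, dotProduct, dotProduct, ← Finset.sum_sub_distrib]
      exact Finset.sum_congr rfl fun j _ => by ring
    have hterm : ∀ j ∈ Finset.univ, 0 ≤ y' j * (A.mulVec xs j - b j) := fun j _ =>
      mul_nonneg (h2 j) (by linarith [hfeas j])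
    have hz := (Finset.sum_eq_zero_iff_of_nonneg hterm).mp hsum i (Finset.mem_univ i)
    rcases mul_eq_zero.mp hz with h | h
    · exact h
    · exact absurd h (by have := hstrict i hi; linarith)
  rcases Nat.eq_zero_or_pos n with hn | hn
  · -- degenerate case n = 0 : the unique dual optimum is 0
    subst hn
    have hSempty : ∀ i, ¬ p i := by
      intro i hi
      have : ({i : Fin m | A.mulVec xs i = b i} : Set (Fin m)) = ∅ :=
        (Set.ncard_eq_zero (Set.toFinite _)).mp hcard
      exact absurd (by exact hi : i ∈ {i : Fin m | A.mulVec xs i = b i}) (by rw [this]; simp)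
    have hcxs : c ⬝ᵥ xs = 0 := by simp [dotProduct]
    have hc0 : Aᵀ.mulVec (0 : Fin m → ℝ) = c := Subsingleton.elim _ _
    refine ⟨0, ⟨⟨hc0, fun i => le_refl 0⟩, fun y' hy' => ?_⟩, ?_⟩
    · have := weak y' hy'.1 hy'.2
      simpa [hcxs] using this
    · intro y' ⟨⟨h1, h2⟩, hopt'⟩
      have hle : b ⬝ᵥ y' ≤ 0 := by have := weak y' h1 h2; simpa [hcxs] using this
      have hge : (0:ℝ) ≤ b ⬝ᵥ y' := by
        have := hopt' 0 ⟨hc0, fun i => le_refl 0⟩; simpa using this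
      have heq : b ⬝ᵥ y' = c ⬝ᵥ xs := by rw [hcxs]; linarith
      funext i
      exact slack_zero y' h1 h2 heq i (hSempty i)
  · -- main case n > 0
    have hcardS : Fintype.card (Subtype p) = n := by
      rw [← Nat.card_eq_fintype_card]
      exact (Nat.card_coe_set_eq {i : Fin m | A.mulVec xs i = b i}).trans hcard
    haveI : Nonempty (Subtype p) := Fintype.card_pos_iff.mp (by rw [hcardS]; exact hn)
    have hfr : Fintype.card (Subtype p) = Module.finrank ℝ (Fin n → ℝ) := by
      rw [hcardS, Module.finrank_fin_fun]
    let B : Module.Basis (Subtype p) ℝ (Fin n → ℝ) := basisOfLinearIndependentOfCardEqFinrank hind hfr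
    have hB : ∀ s : Subtype p, B s = A s.1 := fun s =>
      congrFun (coe_basisOfLinearIndependentOfCardEqFinrank hind hfr) s
    set w : Subtype p → ℝ := fun s => B.repr c s with hw
    set y : Fin m → ℝ := fun i => if h : p i then w ⟨i, h⟩ else 0 with hy
    have hy0 : ∀ i, ¬ p i → y i = 0 := fun i hi => by simp [hy, hi]
    have hyS : ∀ s : Subtype p, y s.1 = w s := fun s => dif_pos s.2
    have hsum_c : c = ∑ s : Subtype p, w s • A s.1 := by
      conv_lhs => rw [← B.sum_repr c]
      exact Finset.sum_congr rfl fun s _ => by rw [hB s]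
    have hAy : Aᵀ.mulVec y = c := by
      funext j
      have h1 : Aᵀ.mulVec y j = ∑ i, A i j * y i := by
        simp [mulVec, dotProduct, transpose_apply]
      rw [h1, sum_off_zero p (fun i => A i j * y i) (fun i hi => by show A i j * y i = 0; rw [hy0 i hi]; ring)]
      have h2 : c j = ∑ s : Subtype p, w s * A s.1 j := by
        conv_lhs => rw [hsum_c]
        simp [Finset.sum_apply]
      rw [h2]
      exact Finset.sum_congr rfl fun s _ => by rw [hyS s]; ring
    -- nonnegativity of the coefficients
    have hw_nonneg : ∀ s : Subtype p, 0 ≤ w s := by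
      by_contra hneg
      push_neg at hneg
      obtain ⟨k0, hk0⟩ := hneg
      -- the linear map d ↦ (A s ⬝ᵥ d)ₛ is bijective
      let T : (Fin n → ℝ) →ₗ[ℝ] (Subtype p → ℝ) :=
        { toFun := fun d s => A s.1 ⬝ᵥ d
          map_add' := fun d e => by funext s; simp [dotProduct_add]
          map_smul' := fun r d => by funext s; simp [dotProduct_smul] }
      have hTinj : Function.Injective T := by
        rw [← LinearMap.ker_eq_bot, LinearMap.ker_eq_bot']
        intro d hd
        have hds : ∀ s : Subtype p, A s.1 ⬝ᵥ d = 0 := fun s => congrFun hd s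
        have hdd : d ⬝ᵥ d = 0 := by
          have hdecomp : d = ∑ s : Subtype p, B.repr d s • A s.1 := by
            conv_lhs => rw [← B.sum_repr d]
            exact Finset.sum_congr rfl fun s _ => by rw [hB s]
          have h' : d ⬝ᵥ d = (∑ s : Subtype p, B.repr d s • A s.1) ⬝ᵥ d :=
            congrArg (fun v => v ⬝ᵥ d) hdecomp
          rw [h', sum_dotProduct']
          exact Finset.sum_eq_zero fun s _ => by rw [smul_dotProduct, hds s, smul_zero]
        exact dotProduct_self_eq_zero.mp hdd
      have hTsurj : Function.Surjective T :=
        (LinearMap.injective_iff_surjective_of_finrank_eq_finrank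
          (by rw [Module.finrank_fin_fun, Module.finrank_pi, hcardS])).mp hTinj
      obtain ⟨d, hd⟩ := hTsurj (Pi.single k0 1)
      have hAd : ∀ s : Subtype p, A s.1 ⬝ᵥ d = (Pi.single k0 1 : Subtype p → ℝ) s := fun s => by
        have := congrFun hd s
        simpa [T] using this
      -- choose a small step size
      haveI : Nonempty (Fin m) := ⟨k0.1⟩
      set r : Fin m → ℝ :=
        fun i => if p i then 1 else (A.mulVec xs i - b i) / (|A.mulVec d i| + 1) with hr
      have hrpos : ∀ i, 0 < r i := by
        intro i
        by_cases h : p i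
        · simp only [hr, if_pos h]; norm_num
        · have hs := hstrict i h
          simp only [hr, if_neg h]
          positivity
      set ε : ℝ := Finset.univ.inf' Finset.univ_nonempty r with hε
      have hεpos : 0 < ε := (Finset.lt_inf'_iff _).mpr fun i _ => hrpos i
      have hεle : ∀ i, ε ≤ r i := fun i => Finset.inf'_le r (Finset.mem_univ i)
      have hfeas' : ∀ i, b i ≤ A.mulVec (xs + ε • d) i := by
        intro i
        have hadd : A.mulVec (xs + ε • d) i = A.mulVec xs i + ε * A.mulVec d i := by
          rw [mulVec_add, mulVec_smul]; simp
        rw [hadd]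
        by_cases h : p i
        · have hval : A i ⬝ᵥ d = (Pi.single k0 1 : Subtype p → ℝ) ⟨i, h⟩ := hAd ⟨i, h⟩
          have hmv : A.mulVec d i = A i ⬝ᵥ d := rfl
          have hnn : (0:ℝ) ≤ A.mulVec d i := by
            rw [hmv, hval, Pi.single_apply]
            by_cases hk : (⟨i, h⟩ : Subtype p) = k0 <;> simp [hk]
          have hb : A.mulVec xs i = b i := h
          nlinarith
        · have h1 : ε ≤ (A.mulVec xs i - b i) / (|A.mulVec d i| + 1) := by
            have h' := hεle i
            simp only [hr] at h'
            rwa [if_neg h] at h'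
          have h2 : ε * (|A.mulVec d i| + 1) ≤ A.mulVec xs i - b i :=
            (le_div_iff₀ (by positivity)).mp h1
          have h3 : -|A.mulVec d i| ≤ A.mulVec d i := neg_abs_le _
          nlinarith [abs_nonneg (A.mulVec d i), hεpos]
      have hcd : c ⬝ᵥ d = w k0 := by
        conv_lhs => rw [hsum_c]
        rw [sum_dotProduct']
        have heach : ∀ s : Subtype p, (w s • A s.1) ⬝ᵥ d
            = w s * (Pi.single k0 1 : Subtype p → ℝ) s := by
          intro s
          rw [smul_dotProduct, hAd s, smul_eq_mul]
        rw [Finset.sum_congr rfl (fun s _ => heach s)]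
        simp [Pi.single_apply, mul_ite]
      have hles := hopt (xs + ε • d) hfeas'
      have hcx : c ⬝ᵥ (xs + ε • d) = c ⬝ᵥ xs + ε * (c ⬝ᵥ d) := by
        rw [dotProduct_add, dotProduct_smul]; simp
      rw [hcx, hcd] at hles
      nlinarith
    have hynn : ∀ i, 0 ≤ y i := by
      intro i
      by_cases h : p i
      · rw [hyS ⟨i, h⟩]; exact hw_nonneg _
      · rw [hy0 i h]
    -- complementary slackness for y
    have hby : b ⬝ᵥ y = c ⬝ᵥ xs := by
      have h1 : b ⬝ᵥ y = y ⬝ᵥ A.mulVec xs := by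
        rw [dotProduct_comm b y, dotProduct, dotProduct]
        refine Finset.sum_congr rfl fun i _ => ?_
        by_cases h : p i
        · rw [show A.mulVec xs i = b i from h]
        · rw [hy0 i h]; ring
      rw [h1, dotProduct_mulVec, ← mulVec_transpose, hAy]
    refine ⟨y, ⟨⟨hAy, hynn⟩, fun y' hy' => (weak y' hy'.1 hy'.2).trans_eq hby.symm⟩, ?_⟩
    intro y' ⟨⟨h1, h2⟩, hopt'⟩
    have hle : b ⬝ᵥ y' ≤ c ⬝ᵥ xs := weak y' h1 h2
    have hge : b ⬝ᵥ y ≤ b ⬝ᵥ y' := hopt' y ⟨hAy, hynn⟩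
    have heq : b ⬝ᵥ y' = c ⬝ᵥ xs := le_antisymm hle (by rw [← hby]; exact hge)
    have hz' : ∀ i, ¬ p i → y' i = 0 := slack_zero y' h1 h2 heq
    have hdiff : ∑ s : Subtype p, (y' s.1 - y s.1) • A s.1 = 0 := by
      have hsub : ∀ (z : Fin m → ℝ), Aᵀ.mulVec z = c → (∀ i, ¬ p i → z i = 0) →
          ∀ j, ∑ s : Subtype p, z s.1 * A s.1 j = c j := by
        intro z hz hz0 j
        have h1' : Aᵀ.mulVec z j = ∑ i, A i j * z i := by
          simp [mulVec, dotProduct, transpose_apply]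
        rw [← hz, h1',
          sum_off_zero p (fun i => A i j * z i)
            (fun i hi => by show A i j * z i = 0; rw [hz0 i hi]; ring)]
        exact Finset.sum_congr rfl fun s _ => by ring
      funext j
      have e1 := hsub y' h1 hz' j
      have e2 := hsub y hAy hy0 j
      have : (∑ s : Subtype p, (y' s.1 - y s.1) • A s.1) j
          = ∑ s : Subtype p, (y' s.1 * A s.1 j - y s.1 * A s.1 j) := by
        simp [Finset.sum_apply, sub_mul]
      rw [this, Finset.sum_sub_distrib, e1, e2]
      simp
    have hcoef := Fintype.linearIndependent_iff.mp hind (fun s => y' s.1 - y s.1) hdiff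
    funext i
    by_cases h : p i
    · have := hcoef ⟨i, h⟩
      have : y' i - y i = 0 := this
      linarith
    · rw [hz' i h, hy0 i h]
end
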